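/- Let G be a graph, E* ⊆ E(G) with g_G(E*) = r₀. If C is a cycle of G with |V(C)| ≤ r₀ and |E(C) ∩ E*| odd, then |V(C)| = r₀ and C is an induced cycle of G. -/

import Mathlib

open SimpleGraph

attribute [local instance] Classical.propDecidable

universe u
variable {V : Type u}

/-- `H` (on vertex set `V × Fin m`) is an `m`-fold cover of `G`. -/
def IsCover (G : SimpleGraph V) (m : ℕ) (H : SimpleGraph (V × Fin m)) : Prop :=
  (∀ (u : V) (i j : Fin m), i ≠ j → H.Adj (u, i) (u, j)) ∧
  (∀ (u v : V) (i j : Fin m), u ≠ v → H.Adj (u, i) (v, j) → G.Adj u v) ∧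
  (∀ (u v : V) (i j j' : Fin m), u ≠ v → H.Adj (u, i) (v, j) → H.Adj (u, i) (v, j') → j = j')

/-- A full cover: every matching between fibers over an edge is perfect. -/
def IsFullCover (G : SimpleGraph V) (m : ℕ) (H : SimpleGraph (V × Fin m)) : Prop :=
  IsCover G m H ∧ ∀ u v : V, G.Adj u v → ∀ i : Fin m, ∃ j : Fin m, H.Adj (u, i) (v, j)

/-- Number of ℋ-colorings (independent transversals) of a cover graph `H`. -/
noncomputable def coverCount {m : ℕ} (H : SimpleGraph (V × Fin m)) : ℕ :=
  Nat.card {f : V → Fin m // ∀ u v : V, ¬ H.Adj (u, f u) (v, f v)}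

/-- The DP color function. -/
noncomputable def PDP (G : SimpleGraph V) (m : ℕ) : ℕ :=
  sInf {n | ∃ H : SimpleGraph (V × Fin m), IsCover G m H ∧ n = coverCount H}

/-- Number of proper m-colorings, i.e. the chromatic polynomial evaluated at m. -/
noncomputable def properCount (G : SimpleGraph V) (m : ℕ) : ℕ :=
  Nat.card {f : V → Fin m // ∀ u v : V, G.Adj u v → f u ≠ f v}

/-- Girth of an edge: length of a shortest cycle through `e` (∞ if none). -/
noncomputable def edgeGirth (G : SimpleGraph V) (e : Sym2 V) : ℕ∞ :=
  ⨅ (a : V) (p : G.Walk a a) (_ : p.IsCycle) (_ : e ∈ p.edges), (p.length : ℕ∞)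

/-- Girth of an edge set `E₀`: length of a shortest cycle meeting `E₀` in an odd
number of edges (∞ if none). -/
noncomputable def setGirth (G : SimpleGraph V) (E₀ : Set (Sym2 V)) : ℕ∞ :=
  ⨅ (a : V) (p : G.Walk a a) (_ : p.IsCycle)
    (_ : Odd (p.edges.countP (fun e => e ∈ E₀))), (p.length : ℕ∞)

/-- The canonical cover graph `H_{G,m}`. -/
def canonicalCover (G : SimpleGraph V) (m : ℕ) : SimpleGraph (V × Fin m) where
  Adj x y := (x.1 = y.1 ∧ x.2 ≠ y.2) ∨ (G.Adj x.1 y.1 ∧ x.2 = y.2)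
  symm := by
    constructor
    rintro ⟨u, i⟩ ⟨v, j⟩ (⟨h1, h2⟩ | ⟨h1, h2⟩)
    · exact Or.inl ⟨h1.symm, h2.symm⟩
    · exact Or.inr ⟨h1.symm, h2.symm⟩
  loopless := by constructor; rintro ⟨u, i⟩ (⟨h1, h2⟩ | ⟨h1, h2⟩) <;> simp_all

/-- `D` is an orientation of the edge set `E₀`. -/
def IsOrientation (D : Set (V × V)) (E₀ : Set (Sym2 V)) : Prop :=
  (∀ x ∈ D, s(x.1, x.2) ∈ E₀) ∧
  ∀ u v : V, s(u, v) ∈ E₀ → ((u, v) ∈ D ↔ (v, u) ∉ D)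

/-- The directed edges `D` are balanced on the closed walk `p`. -/
noncomputable def BalancedOn {G : SimpleGraph V} (D : Set (V × V)) {a : V}
    (p : G.Walk a a) : Prop :=
  p.darts.countP (fun d => (d.fst, d.snd) ∈ D) =
    p.darts.countP (fun d => (d.snd, d.fst) ∈ D)

/-- A DP-good graph. -/
def DPGood [Fintype V] (G : SimpleGraph V) : Prop :=
  G.Connected ∧
  ∃ T : SimpleGraph V, T ≤ G ∧ T.IsTree ∧
    ∃ (q : ℕ) (e : Fin q → Sym2 V),
      Function.Injective e ∧
      Set.range e = G.edgeSet \ T.edgeSet ∧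
      (∀ i j : Fin q, i ≤ j → edgeGirth G (e i) ≤ edgeGirth G (e j)) ∧
      ∀ i : Fin q, ∃ g : ℕ, Odd g ∧ edgeGirth G (e i) = (g : ℕ∞) ∧
        ∃ (a : V) (C : G.Walk a a), C.IsCycle ∧ e i ∈ C.edges ∧ C.length = g ∧
          ∀ f ∈ C.edges, f ∈ T.edgeSet ∪ {e j | j ≤ i}


lemma setGirth_le_cycle {V : Type u} (G : SimpleGraph V) (Estar : Set (Sym2 V))
    {a : V} (p : G.Walk a a) (hp : p.IsCycle)
    (hodd : Odd (p.edges.countP (fun e => e ∈ Estar))) :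
    setGirth G Estar ≤ (p.length : ℕ∞) :=
  iInf_le_of_le a (iInf_le_of_le p (iInf_le_of_le hp (iInf_le _ hodd)))

/-- a cycle of length at most `r₀ = g_G(E*)` meeting `E*` in an odd
number of edges has length exactly `r₀` and is induced. -/
theorem short_odd_cycle_is_induced {V : Type} [DecidableEq V]
    (G : SimpleGraph V) (Estar : Set (Sym2 V))
    (r₀ : ℕ) (hr : setGirth G Estar = (r₀ : ℕ∞))
    (a : V) (p : G.Walk a a) (hp : p.IsCycle) (hlen : p.length ≤ r₀)
    (hodd : Odd (p.edges.countP (fun e => e ∈ Estar))) :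
    p.length = r₀ ∧
    ∀ u v : V, u ∈ p.support → v ∈ p.support → G.Adj u v → s(u, v) ∈ p.edges := by
  have hge : r₀ ≤ p.length := by
    have := setGirth_le_cycle G Estar p hp hodd
    rw [hr] at this
    exact_mod_cast this
  refine ⟨le_antisymm hlen hge, ?_⟩
  intro u v hu hv hadj
  by_contra hch
  have hne : u ≠ v := hadj.ne
  set c := p.rotate u hu with hc_def
  have hc : c.IsCycle := hp.rotate hu
  have hlen3 : 3 ≤ p.length := hp.three_le_length
  have htail_ne : p.support.tail ≠ [] := by
    have := p.length_support
    intro h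
    rw [← List.length_eq_zero_iff] at h
    have : p.support.length = 1 := by
      rw [p.support_eq_cons]; simp only [List.length_cons, h]
    omega
  have hvtail : v ∈ p.support.tail := by
    rcases List.mem_cons.mp (p.support_eq_cons ▸ hv) with h | h
    · subst h
      obtain ⟨w, hadj', q', hq'⟩ := SimpleGraph.Walk.not_nil_iff.mp hp.not_nil
      rw [hq']
      simp
    · exact h
  have hv' : v ∈ c.support := by
    apply List.mem_of_mem_tail
    exact ((SimpleGraph.Walk.support_rotate p u hu).mem_iff).mpr hvtail
  set q := c.takeUntil v hv' with hq_def
  set r := c.dropUntil v hv' with hr_def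
  have hspec : q.append r = c := c.take_spec hv'
  have hec : s(u, v) ∉ c.edges := fun h => hch (((SimpleGraph.Walk.rotate_edges p u hu).perm.mem_iff).mp h)
  have heq : s(u, v) ∉ q.edges := fun h => hec (c.edges_takeUntil_subset hv' h)
  have her : s(u, v) ∉ r.edges := fun h => hec (c.edges_dropUntil_subset hv' h)
  have hsupp : q.support.tail ++ r.support.tail = c.support.tail := by
    rw [← SimpleGraph.Walk.tail_support_append, hspec]
  have hnodup : (q.support.tail ++ r.support.tail).Nodup := hsupp ▸ hc.support_nodup
  obtain ⟨hnq, hnr, hdisj⟩ := List.nodup_append.mp hnodup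
  have hur : u ∈ r.support.tail := by
    have h0 : u ∈ r.support := r.end_mem_support
    rcases List.mem_cons.mp (r.support_eq_cons ▸ h0) with h | h
    · exact absurd h hne
    · exact h
  have hvq : v ∈ q.support.tail := by
    have h0 : v ∈ q.support := q.end_mem_support
    rcases List.mem_cons.mp (q.support_eq_cons ▸ h0) with h | h
    · exact absurd h.symm hne
    · exact h
  have hqpath : q.IsPath := by
    rw [SimpleGraph.Walk.isPath_def, q.support_eq_cons, List.nodup_cons]
    exact ⟨fun h => hdisj _ h _ hur rfl, hnq⟩
  have hrpath : r.IsPath := by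
    rw [SimpleGraph.Walk.isPath_def, r.support_eq_cons, List.nodup_cons]
    exact ⟨fun h => hdisj _ hvq _ h rfl, hnr⟩
  have hqr : q.reverse.IsPath := hqpath.reverse
  have heqr : s(u, v) ∉ q.reverse.edges := by
    rw [SimpleGraph.Walk.edges_reverse, List.mem_reverse]; exact heq
  have hcyc1 : (SimpleGraph.Walk.cons hadj r).IsCycle :=
    (SimpleGraph.Walk.cons_isCycle_iff r hadj).mpr ⟨hrpath, her⟩
  have hcyc2 : (SimpleGraph.Walk.cons hadj q.reverse).IsCycle :=
    (SimpleGraph.Walk.cons_isCycle_iff q.reverse hadj).mpr ⟨hqr, heqr⟩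
  have hclen : c.length = p.length := by
    have h1 := (SimpleGraph.Walk.rotate_darts p u hu).perm.length_eq
    rwa [SimpleGraph.Walk.length_darts, SimpleGraph.Walk.length_darts] at h1
  have hlensum : q.length + r.length = p.length := by
    have h1 := congrArg SimpleGraph.Walk.length hspec
    rw [SimpleGraph.Walk.length_append] at h1
    omega
  have hq2 : 2 ≤ q.length := by
    have h1 := hcyc2.three_le_length
    simp only [SimpleGraph.Walk.length_cons, SimpleGraph.Walk.length_reverse] at h1
    omega
  have hr2 : 2 ≤ r.length := by
    have h1 := hcyc1.three_le_length
    simp only [SimpleGraph.Walk.length_cons] at h1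
    omega
  set P : Sym2 V → Prop := fun e => e ∈ Estar with hP
  have hcount : q.edges.countP P + r.edges.countP P = p.edges.countP P := by
    have h1 : c.edges.countP P = p.edges.countP P :=
      (SimpleGraph.Walk.rotate_edges p u hu).perm.countP_eq _
    have h2 : c.edges = q.edges ++ r.edges := by
      rw [← hspec, SimpleGraph.Walk.edges_append]
    rw [h2, List.countP_append] at h1
    exact h1
  set t : ℕ := if P s(u, v) then 1 else 0 with ht
  have hcount1 : (SimpleGraph.Walk.cons hadj r).edges.countP P = r.edges.countP P + t := by
    rw [SimpleGraph.Walk.edges_cons, List.countP_cons]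
    simp [ht]
  have hcount2 : (SimpleGraph.Walk.cons hadj q.reverse).edges.countP P
      = q.edges.countP P + t := by
    rw [SimpleGraph.Walk.edges_cons, List.countP_cons]
    have h1 : q.reverse.edges.countP P = q.edges.countP P := by
      rw [SimpleGraph.Walk.edges_reverse, List.countP_reverse]
    simp [h1, ht]
  have hoddsum : (p.edges.countP P) % 2 = 1 := Nat.odd_iff.mp hodd
  have hkey : Odd ((SimpleGraph.Walk.cons hadj r).edges.countP P) ∨
      Odd ((SimpleGraph.Walk.cons hadj q.reverse).edges.countP P) := by
    rw [Nat.odd_iff, Nat.odd_iff, hcount1, hcount2]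
    have ht01 : t = 0 ∨ t = 1 := by rw [ht]; split <;> simp
    omega
  rcases hkey with h | h
  · have h1 := setGirth_le_cycle G Estar _ hcyc1 h
    rw [hr] at h1
    have h2 : r₀ ≤ (SimpleGraph.Walk.cons hadj r).length := by exact_mod_cast h1
    simp only [SimpleGraph.Walk.length_cons] at h2
    omega
  · have h1 := setGirth_le_cycle G Estar _ hcyc2 h
    rw [hr] at h1
    have h2 : r₀ ≤ (SimpleGraph.Walk.cons hadj q.reverse).length := by exact_mod_cast h1
    simp only [SimpleGraph.Walk.length_cons, SimpleGraph.Walk.length_reverse] at h2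
    omega
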